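/- Let H > 1/2, a, b ∈ ℝ, b ≠ 0. Define for 0 ≤ s ≤ t, U_Y(t,s) = exp{b(B^H_t - B^H_s) - (1/2)b²(t-s)^{2H} + a(t-s)} and X_t = exp{bB^H_t - (1/2)b²t^{2H} + at}. Then the mild-type identity X_t = U_Y(t,0) + ∫₀^t U_Y(t,r) a X_r dr FAILS in general: for a ≠ 0, b ≠ 0, H ≠ 1/2 there exist t > 0 with X_t ≠ U_Y(t,0)·1 + ∫₀^t U_Y(t,r)(aX_r) dr. -/
import Mathlib


open MeasureTheory Real

/-- Counterexample: for the one-dimensional equation `dX = aX dt + bX dB^H` with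
`X t = exp (b B t - b² t^(2H)/2 + a t)` and
`U_Y t s = exp (b (B t - B s) - b² (t-s)^(2H)/2 + a (t-s))`, the mild-type identity
`X t = U_Y t 0 + ∫₀^t U_Y t r · (a X r) dr` FAILS for some `t > 0`, whenever
`a ≠ 0`, `b ≠ 0` and `H ∈ (1/2,1)`. -/
theorem mild_formula_fails_for_fbm
    (H : ℝ) (hH : H ∈ Set.Ioo (1 / 2 : ℝ) 1)
    (a b : ℝ) (ha : a ≠ 0) (hb : b ≠ 0)
    (B : ℝ → ℝ) (hBcont : Continuous B) (hB0 : B 0 = 0)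
    (U_Y : ℝ → ℝ → ℝ)
    (hU : ∀ s t : ℝ, U_Y t s
      = Real.exp (b * (B t - B s) - (1 / 2) * b ^ 2 * (t - s) ^ (2 * H) + a * (t - s)))
    (X : ℝ → ℝ)
    (hX : ∀ t : ℝ, X t
      = Real.exp (b * B t - (1 / 2) * b ^ 2 * t ^ (2 * H) + a * t)) :
    ∃ t : ℝ, 0 < t ∧
      X t ≠ U_Y t 0 + ∫ r in Set.Ioc (0 : ℝ) t, U_Y t r * (a * X r) := by
  have h2H : (0:ℝ) ≤ 2 * H := by nlinarith [hH.1]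
  -- U_Y 1 0 = X 1
  have hU0 : U_Y 1 0 = X 1 := by rw [hU, hX]; simp [hB0]
  -- the integrand equals a * g r with g r > 0
  set g : ℝ → ℝ := fun r => U_Y 1 r * X r with hg
  have hgpos : ∀ r, 0 < g r := by
    intro r; rw [hg]; simp only [hU, hX]
    positivity
  have hgcont : Continuous g := by
    have hrpow : Continuous (fun x : ℝ => x ^ (2 * H)) :=
      Real.continuous_rpow_const h2H
    simp only [hg, hU, hX]
    fun_prop
  have hgint : IntegrableOn g (Set.Ioc (0:ℝ) 1) volume :=
    (hgcont.integrableOn_Icc (a := 0) (b := 1)).mono_set Set.Ioc_subset_Icc_self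
  have hIpos : 0 < ∫ r in Set.Ioc (0:ℝ) 1, g r := by
    rw [setIntegral_pos_iff_support_of_nonneg_ae]
    · have : Function.support g ∩ Set.Ioc (0:ℝ) 1 = Set.Ioc 0 1 := by
        apply Set.inter_eq_self_of_subset_right
        intro x _; exact (hgpos x).ne'
      rw [this]
      simp
    · filter_upwards with r using (hgpos r).le
    · exact hgint
  refine ⟨1, one_pos, ?_⟩
  have hint : (∫ r in Set.Ioc (0:ℝ) 1, U_Y 1 r * (a * X r))
      = a * ∫ r in Set.Ioc (0:ℝ) 1, g r := by
    rw [← integral_const_mul]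
    congr 1; ext r; rw [hg]; ring
  rw [hU0, hint]
  intro h
  have : a * ∫ r in Set.Ioc (0:ℝ) 1, g r = 0 := by linarith
  rcases mul_eq_zero.mp this with h' | h'
  · exact ha h'
  · exact hIpos.ne' h'
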